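/- Let < be an HF-ordering of an infinite Steiner triple system M and let n < ω. For every a ∈ M there is a binary tree {a_s : s ∈ 2^{<n}} of distinct elements of M such that a_s = a_{s0}·a_{s1} for all s ∈ 2^{<n-1}, a_s > a for every s, and a_s > a_t whenever s is a proper initial segment of t. -/

import Mathlib

/-- A Steiner quasigroup operation. -/
def IsSQ {M : Type*} (op : M → M → M) : Prop :=
  (∀ x y, op x y = op y x) ∧ (∀ x, op x x = x) ∧ (∀ x y, op x (op x y) = y)

/-- An HF-ordering of the STS given by a Steiner quasigroup. -/
def IsHFOrderQ {M : Type*} (op : M → M → M) (r : M → M → Prop) : Prop :=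
  IsStrictTotalOrder M r ∧
    ∀ a b₁ b₂ c₁ c₂ : M, b₁ ≠ b₂ → c₁ ≠ c₂ → a = op b₁ b₂ → a = op c₁ c₂ →
      r b₁ a → r b₂ a → r c₁ a → r c₂ a → ({b₁, b₂} : Set M) = {c₁, c₂}

namespace HFAux

variable {M : Type*}

section SQ

variable {op : M → M → M}

lemma sq_comm (hSQ : IsSQ op) (x y : M) : op x y = op y x := hSQ.1 x y

lemma sq_cancel (hSQ : IsSQ op) (x y : M) : op x (op x y) = y := hSQ.2.2 x y

lemma sq_cancel' (hSQ : IsSQ op) (x y : M) : op y (op x y) = x := by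
  rw [hSQ.1 x y]; exact hSQ.2.2 y x

lemma sq_eq_right (hSQ : IsSQ op) {x y : M} (h : op x y = y) : x = y := by
  have h1 : op y x = y := (hSQ.1 y x).trans h
  have h2 := hSQ.2.2 y x
  rw [h1, hSQ.2.1] at h2
  exact h2.symm

lemma sq_eq_left (hSQ : IsSQ op) {x y : M} (h : op x y = x) : x = y := by
  have := sq_eq_right hSQ ((hSQ.1 y x).trans h)
  exact this.symm

end SQ

/-- The finset of binary strings of length `< n`. -/
def SL : ℕ → Finset (List Bool)
  | 0 => ∅
  | n + 1 => insert [] (((SL n).image (List.cons false)) ∪ ((SL n).image (List.cons true)))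

lemma mem_SL : ∀ (n : ℕ) (s : List Bool), s ∈ SL n ↔ s.length < n := by
  intro n
  induction n with
  | zero => intro s; simp [SL]
  | succ n ih =>
    intro s
    cases s with
    | nil => simp [SL]
    | cons b s' =>
      cases b <;>
        simp [SL, ih s', Nat.succ_lt_succ_iff, List.cons_eq_cons]

/-- The tree property from the theorem. -/
def Good (op : M → M → M) (r : M → M → Prop) (n : ℕ) (a : M) (t : List Bool → M) : Prop :=
  (∀ s u : List Bool, s.length < n → u.length < n → t s = t u → s = u) ∧
  (∀ s : List Bool, s.length + 1 < n →
    t s = op (t (s ++ [false])) (t (s ++ [true]))) ∧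
  (∀ s : List Bool, s.length < n → r a (t s)) ∧
  (∀ s u : List Bool, u.length < n → s <+: u → s ≠ u → r (t u) (t s))

section Main

variable [Infinite M] {op : M → M → M} {r : M → M → Prop}

/-- The set of elements above `a` is infinite. -/
lemma above_infinite (hSQ : IsSQ op) (hr : IsHFOrderQ op r) (a : M) : {x : M | r a x}.Infinite := by
  classical
  haveI := hr.1
  by_contra hfin
  rw [Set.not_infinite] at hfin
  set U : Finset M := insert a hfin.toFinset with hU
  set B : Finset M := U ∪ U.image (op a) with hB
  obtain ⟨y₁, hy₁⟩ := Infinite.exists_notMem_finset B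
  obtain ⟨y₂, hy₂⟩ := Infinite.exists_notMem_finset (B ∪ {y₁, op a y₁})
  -- basic facts
  have hmemU : ∀ y : M, y ∉ B → (¬ r a y ∧ y ≠ a) := by
    intro y hy
    constructor
    · intro h
      exact hy (Finset.mem_union_left _ (Finset.mem_insert_of_mem (hfin.mem_toFinset.mpr h)))
    · intro h
      subst h
      exact hy (Finset.mem_union_left _ (Finset.mem_insert_self y _))
  have hza : ∀ y : M, y ∉ B → (¬ r a (op a y) ∧ op a y ≠ a) := by
    intro y hy
    have hne : op a y ≠ a := by
      intro h
      have := sq_cancel hSQ a y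
      rw [h, hSQ.2.1] at this
      exact (hmemU y hy).2 this.symm
    refine ⟨fun h => ?_, hne⟩
    have : op a y ∈ U := Finset.mem_insert_of_mem (hfin.mem_toFinset.mpr h)
    have : y ∈ U.image (op a) := by
      refine Finset.mem_image.mpr ⟨op a y, this, ?_⟩
      exact sq_cancel hSQ a y
    exact hy (Finset.mem_union_right _ this)
  have hlt : ∀ y : M, y ∉ B → r y a ∧ r (op a y) a := by
    intro y hy
    obtain ⟨h1, h2⟩ := hmemU y hy
    obtain ⟨h3, h4⟩ := hza y hy
    constructor
    · rcases trichotomous_of r y a with h | h | h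
      · exact h
      · exact absurd h h2
      · exact absurd h h1
    · rcases trichotomous_of r (op a y) a with h | h | h
      · exact h
      · exact absurd h h4
      · exact absurd h h3
  have hy₂B : y₂ ∉ B := fun h => hy₂ (Finset.mem_union_left _ h)
  have hne1 : ∀ y : M, y ∉ B → y ≠ op a y := by
    intro y hy h
    have h2 := sq_cancel' hSQ a y
    rw [← h] at h2
    rw [hSQ.2.1] at h2
    exact (hmemU y hy).2 h2
  have hprod : ∀ y : M, a = op y (op a y) := by
    intro y
    rw [hSQ.1 a y]
    exact (sq_cancel hSQ y a).symm
  obtain ⟨h1a, h1b⟩ := hlt y₁ hy₁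
  obtain ⟨h2a, h2b⟩ := hlt y₂ hy₂B
  have hset := hr.2 a y₁ (op a y₁) y₂ (op a y₂) (hne1 y₁ hy₁) (hne1 y₂ hy₂B)
    (hprod y₁) (hprod y₂) h1a h1b h2a h2b
  have : y₂ ∈ ({y₁, op a y₁} : Set M) := by
    rw [hset]; exact Set.mem_insert _ _
  have h' : y₂ = y₁ ∨ y₂ = op a y₁ := by simpa using this
  exact hy₂ (Finset.mem_union_right _ (by rcases h' with h | h <;> simp [h]))

/-- Sequences of pairwise "disjoint" good trees avoiding a finite set. -/
lemma exists_seq (n : ℕ) (a : M)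
    (IH : ∀ F : Finset M, ∃ t, Good op r n a t ∧ ∀ s, s.length < n → t s ∉ F)
    (F : Finset M) :
    ∀ m : ℕ, ∃ ts : ℕ → (List Bool → M),
      (∀ i, i < m → Good op r n a (ts i)) ∧
      (∀ i, i < m → ∀ s, s.length < n → ts i s ∉ F) ∧
      (∀ i' i, i' < i → i < m → ∀ s s', s.length < n → s'.length < n → ts i s ≠ ts i' s') := by
  intro m
  induction m with
  | zero => exact ⟨fun _ _ => a, fun i hi => absurd hi (Nat.not_lt_zero i),
      fun i hi => absurd hi (Nat.not_lt_zero i),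
      fun i' i _ hi => absurd hi (Nat.not_lt_zero i)⟩
  | succ m ihm =>
    obtain ⟨ts, h1, h2, h3⟩ := ihm
    classical
    set F' : Finset M := F ∪ (Finset.range m).biUnion (fun j => (SL n).image (ts j)) with hF'
    obtain ⟨T, hT, hTa⟩ := IH F'
    refine ⟨Function.update ts m T, ?_, ?_, ?_⟩
    · intro i hi
      rcases Nat.lt_succ_iff_lt_or_eq.mp hi with hi' | heq
      · rw [Function.update_of_ne (Nat.ne_of_lt hi')]; exact h1 i hi'
      · rw [heq, Function.update_self]; exact hT
    · intro i hi s hs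
      rcases Nat.lt_succ_iff_lt_or_eq.mp hi with hi' | heq
      · rw [Function.update_of_ne (Nat.ne_of_lt hi')]; exact h2 i hi' s hs
      · rw [heq, Function.update_self]
        intro h
        exact hTa s hs (Finset.mem_union_left _ h)
    · intro i' i hii hi s s' hs hs'
      rcases Nat.lt_succ_iff_lt_or_eq.mp hi with hilt | heq
      · have : i' ≠ m := Nat.ne_of_lt (lt_trans hii hilt)
        rw [Function.update_of_ne (Nat.ne_of_lt hilt), Function.update_of_ne this]
        exact h3 i' i hii hilt s s' hs hs'
      · have : i' ≠ m := Nat.ne_of_lt (heq ▸ hii)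
        rw [heq, Function.update_self, Function.update_of_ne this]
        intro h
        apply hTa s hs
        refine Finset.mem_union_right _ (Finset.mem_biUnion.mpr ⟨i', Finset.mem_range.mpr (heq ▸ hii), ?_⟩)
        exact Finset.mem_image.mpr ⟨s', (mem_SL n s').mpr hs', h.symm⟩

/-- The main inductive lemma. -/
lemma key (hSQ : IsSQ op) (hr : IsHFOrderQ op r) (n : ℕ) : ∀ (a : M) (F : Finset M),
    ∃ t, Good op r n a t ∧ ∀ s, s.length < n → t s ∉ F := by
  haveI := hr.1
  have htr : ∀ {x y z : M}, r x y → r y z → r x z := fun h1 h2 => _root_.trans h1 h2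
  have hirr : ∀ x : M, ¬ r x x := fun x => irrefl_of r x
  induction n with
  | zero =>
    intro a F
    exact ⟨fun _ => a, ⟨fun s u hs => absurd hs (Nat.not_lt_zero _),
      fun s hs => absurd hs (by omega),
      fun s hs => absurd hs (Nat.not_lt_zero _),
      fun s u hu => absurd hu (Nat.not_lt_zero _)⟩,
      fun s hs => absurd hs (Nat.not_lt_zero _)⟩
  | succ n IH =>
    intro a F
    rcases Nat.eq_zero_or_pos n with rfl | hn
    · -- depth-1 tree: a single element above a, outside F
      obtain ⟨x, hx, hxF⟩ := (above_infinite hSQ hr a).exists_notMem_finset F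
      refine ⟨fun _ => x, ⟨?_, ?_, ?_, ?_⟩, ?_⟩
      · intro s u hs hu _
        rw [Nat.lt_one_iff, List.length_eq_zero_iff] at hs hu
        rw [hs, hu]
      · intro s hs; omega
      · intro s _; exact hx
      · intro s u hu hsu hne
        rw [Nat.lt_one_iff, List.length_eq_zero_iff] at hu
        subst hu
        rw [List.prefix_nil] at hsu
        exact absurd hsu hne
      · intro s _; exact hxF
    · -- main step: n ≥ 1
      letI : DecidableRel r := fun _ _ => Classical.dec _
      letI : LinearOrder M := linearOrderOfSTO r
      obtain ⟨ts, hG, hF, hD⟩ := exists_seq n a (IH a) F (F.card + 4)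
      set m := F.card + 4 with hm
      set ρ : ℕ → M := fun i => ts i [] with hρ
      have hnil : ([] : List Bool).length < n := by simpa using hn
      have hρinj : ∀ i i', i < m → i' < m → ρ i = ρ i' → i = i' := by
        intro i i' hi hi' h
        by_contra hne
        rcases Nat.lt_or_ge i i' with hlt | hge
        · exact hD i i' hlt hi' [] [] hnil hnil h.symm
        · exact hD i' i (lt_of_le_of_ne hge (Ne.symm hne)) hi [] [] hnil hnil h
      set S : Finset M := (Finset.range m).image ρ with hS
      have hScard : S.card = m := by
        rw [hS, Finset.card_image_of_injOn, Finset.card_range]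
        intro i hi i' hi' h
        exact hρinj i i' (Finset.mem_range.mp hi) (Finset.mem_range.mp hi') h
      have hSne : S.Nonempty := by
        rw [← Finset.card_pos, hScard]; omega
      set z : M := S.max' hSne with hz
      obtain ⟨i₀, hi₀m, hρi₀⟩ := Finset.mem_image.mp (S.max'_mem hSne)
      rw [Finset.mem_range] at hi₀m
      rw [← hz] at hρi₀
      -- the bad set coming from the HF property
      obtain ⟨B₁, hB₁mem, hB₁card⟩ : ∃ B₁ : Finset M,
          (∀ w, r w z ∧ r (op w z) z → w ∈ B₁) ∧ B₁.card ≤ 2 := by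
        by_cases hP : ∃ w, r w z ∧ r (op w z) z
        · obtain ⟨w₀, hw₀⟩ := hP
          refine ⟨{w₀, op w₀ z}, ?_, (Finset.card_insert_le _ _).trans (by simp)⟩
          intro w hw
          have hne : ∀ v : M, r v z → v ≠ op v z := by
            intro v hv h
            have h2 := sq_cancel hSQ v z
            rw [← h, hSQ.2.1] at h2
            rw [h2] at hv
            exact hirr z hv
          have hzeq : ∀ v : M, z = op v (op v z) := fun v => (sq_cancel hSQ v z).symm
          have hset := hr.2 z w₀ (op w₀ z) w (op w z) (hne w₀ hw₀.1) (hne w hw.1)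
            (hzeq w₀) (hzeq w) hw₀.1 hw₀.2 hw.1 hw.2
          have hmem : w ∈ ({w₀, op w₀ z} : Set M) := by
            rw [hset]; exact Set.mem_insert _ _
          have h' : w = w₀ ∨ w = op w₀ z := by simpa using hmem
          rcases h' with h | h <;> simp [h]
        · exact ⟨∅, fun w hw => absurd ⟨w, hw⟩ hP, by simp⟩
      set B : Finset M := B₁ ∪ F.image (fun w => op z w) with hB
      have hBcard : B.card ≤ F.card + 2 := by
        calc B.card ≤ B₁.card + (F.image (fun w => op z w)).card := Finset.card_union_le _ _
        _ ≤ 2 + F.card := add_le_add hB₁card Finset.card_image_le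
        _ = F.card + 2 := by omega
      have hErase : (S.erase z).card = m - 1 := by
        rw [Finset.card_erase_of_mem (S.max'_mem hSne), hScard]
      obtain ⟨y, hyErase, hyB⟩ : ∃ y ∈ S.erase z, y ∉ B := by
        by_contra h
        push_neg at h
        have hsub : S.erase z ⊆ B := fun w hw => h w hw
        have := Finset.card_le_card hsub
        omega
      have hyS : y ∈ S := Finset.mem_of_mem_erase hyErase
      have hyne : y ≠ z := Finset.ne_of_mem_erase hyErase
      have hyz : r y z := lt_of_le_of_ne (S.le_max' y hyS) hyne
      obtain ⟨j, hjm, hρj⟩ := Finset.mem_image.mp hyS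
      rw [Finset.mem_range] at hjm
      have hji₀ : j ≠ i₀ := by
        intro h
        apply hyne
        rw [← hρj, h, hρi₀]
      set x : M := op y z with hx
      have hxz : x ≠ z := by
        intro h
        exact hyne (sq_eq_right hSQ h)
      have hzx : r z x := by
        rcases trichotomous_of r x z with h | h | h
        · exact absurd (hB₁mem y ⟨hyz, h⟩) (fun hmem => hyB (Finset.mem_union_left _ hmem))
        · exact absurd h hxz
        · exact h
      have hyx : r y x := htr hyz hzx
      have haz : r a z := by
        rw [← hρi₀]
        exact (hG i₀ hi₀m).2.2.1 [] hnil
      have hax : r a x := htr haz hzx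
      have hxF : x ∉ F := by
        intro h
        apply hyB
        apply Finset.mem_union_right
        refine Finset.mem_image.mpr ⟨x, h, ?_⟩
        exact sq_cancel' hSQ y z
      -- the new tree
      set t : List Bool → M := fun s => match s with
        | [] => x
        | false :: s' => ts j s'
        | true :: s' => ts i₀ s' with ht
      have hroot_le : ∀ k, k < m → ∀ u' : List Bool, u'.length < n →
          ts k u' = ρ k ∨ r (ts k u') (ρ k) := by
        intro k hk u' hu'
        by_cases h : u' = []
        · left; rw [h]
        · right; exact (hG k hk).2.2.2 [] u' hu' List.nil_prefix (Ne.symm h)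
      have hsubx : ∀ k, k < m → r (ρ k) x → ∀ u', u'.length < n → r (ts k u') x := by
        intro k hk hkx u' hu'
        rcases hroot_le k hk u' hu' with h | h
        · rw [h]; exact hkx
        · exact htr h hkx
      have hjx : ∀ u' : List Bool, u'.length < n → r (ts j u') x :=
        hsubx j hjm (by rw [show ρ j = y from hρj]; exact hyx)
      have hix : ∀ u' : List Bool, u'.length < n → r (ts i₀ u') x :=
        hsubx i₀ hi₀m (by rw [show ρ i₀ = z from hρi₀]; exact hzx)
      have hlen : ∀ (b : Bool) (s' : List Bool), (b :: s').length < n + 1 → s'.length < n := by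
        intro b s' h
        simpa using h
      refine ⟨t, ⟨?_, ?_, ?_, ?_⟩, ?_⟩
      · -- injectivity
        intro s u hs hu heq
        revert heq
        match s, u with
        | [], [] => intro heq; rfl
        | [], b :: u' =>
          intro heq
          exfalso
          have hlt : r (t (b :: u')) x := by
            cases b
            · exact hjx u' (hlen _ _ hu)
            · exact hix u' (hlen _ _ hu)
          rw [← heq] at hlt
          exact hirr x hlt
        | b :: s', [] =>
          intro heq
          exfalso
          have hlt : r (t (b :: s')) x := by
            cases b
            · exact hjx s' (hlen _ _ hs)
            · exact hix s' (hlen _ _ hs)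
          rw [heq] at hlt
          exact hirr x hlt
        | false :: s', false :: u' =>
          intro heq
          have := (hG j hjm).1 s' u' (hlen _ _ hs) (hlen _ _ hu) heq
          rw [this]
        | true :: s', true :: u' =>
          intro heq
          have := (hG i₀ hi₀m).1 s' u' (hlen _ _ hs) (hlen _ _ hu) heq
          rw [this]
        | false :: s', true :: u' =>
          intro heq
          exfalso
          have heq' : ts j s' = ts i₀ u' := heq
          rcases Nat.lt_or_ge j i₀ with hlt | hge
          · exact hD j i₀ hlt hi₀m u' s' (hlen _ _ hu) (hlen _ _ hs) heq'.symm
          · exact hD i₀ j (lt_of_le_of_ne hge (Ne.symm hji₀)) hjm s' u'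
              (hlen _ _ hs) (hlen _ _ hu) heq'
        | true :: s', false :: u' =>
          intro heq
          exfalso
          have heq' : ts i₀ s' = ts j u' := heq
          rcases Nat.lt_or_ge j i₀ with hlt | hge
          · exact hD j i₀ hlt hi₀m s' u' (hlen _ _ hs) (hlen _ _ hu) heq'
          · exact hD i₀ j (lt_of_le_of_ne hge (Ne.symm hji₀)) hjm u' s'
              (hlen _ _ hu) (hlen _ _ hs) heq'.symm
      · -- product
        intro s hs
        match s with
        | [] =>
          show x = op (ts j []) (ts i₀ [])
          rw [show ts j [] = y from hρj, show ts i₀ [] = z from hρi₀]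
        | false :: s' =>
          show ts j s' = op (ts j (s' ++ [false])) (ts j (s' ++ [true]))
          exact (hG j hjm).2.1 s' (by simpa using hs)
        | true :: s' =>
          show ts i₀ s' = op (ts i₀ (s' ++ [false])) (ts i₀ (s' ++ [true]))
          exact (hG i₀ hi₀m).2.1 s' (by simpa using hs)
      · -- above a
        intro s hs
        match s with
        | [] => exact hax
        | false :: s' => exact (hG j hjm).2.2.1 s' (hlen _ _ hs)
        | true :: s' => exact (hG i₀ hi₀m).2.2.1 s' (hlen _ _ hs)
      · -- prefix decreasing
        intro s u hu hpre hne
        match s, u with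
        | [], [] => exact absurd rfl hne
        | [], b :: u' =>
          show r (t (b :: u')) x
          cases b
          · exact hjx u' (hlen _ _ hu)
          · exact hix u' (hlen _ _ hu)
        | b :: s', [] =>
          exact absurd (List.prefix_nil.mp hpre) (by simp)
        | b :: s', c :: u' =>
          obtain ⟨rfl, hpre'⟩ := List.cons_prefix_cons.mp hpre
          have hne' : s' ≠ u' := fun h => hne (by rw [h])
          cases b
          · exact (hG j hjm).2.2.2 s' u' (hlen _ _ hu) hpre' hne'
          · exact (hG i₀ hi₀m).2.2.2 s' u' (hlen _ _ hu) hpre' hne'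
      · -- avoids F
        intro s hs
        match s with
        | [] => exact hxF
        | false :: s' => exact hF j hjm s' (hlen _ _ hs)
        | true :: s' => exact hF i₀ hi₀m s' (hlen _ _ hs)

end Main

end HFAux

/-- For every `a` in an infinite STS with an HF-ordering and every `n`, there is a binary
tree `{a_s : s ∈ 2^{<n}}` of distinct elements above `a`, with `a_s = a_{s0}·a_{s1}` and
`a_s > a_t` whenever `s` is a proper initial segment of `t`. -/
theorem HF_binary_tree {M : Type*} [Infinite M] (op : M → M → M) (hSQ : IsSQ op)
    (r : M → M → Prop) (hr : IsHFOrderQ op r) (n : ℕ) (a : M) :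
    ∃ t : List Bool → M,
      (∀ s u : List Bool, s.length < n → u.length < n → t s = t u → s = u) ∧
      (∀ s : List Bool, s.length + 1 < n →
        t s = op (t (s ++ [false])) (t (s ++ [true]))) ∧
      (∀ s : List Bool, s.length < n → r a (t s)) ∧
      (∀ s u : List Bool, u.length < n → s <+: u → s ≠ u → r (t u) (t s)) := by
  obtain ⟨t, ht, -⟩ := HFAux.key hSQ hr n a ∅
  exact ⟨t, ht⟩
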